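/- There are no elements x, y, z of the field ℚ_11 of 11-adic numbers with (x, y, z) ≠ (0, 0, 0) such that 3x^5 + 4y^5 + 5z^5 = 0. -/

import Mathlib

instance : Fact (Nat.Prime 11) := ⟨by norm_num⟩

lemma zmod11_aux : ∀ u v w : ZMod 11, 3 * u ^ 5 + 4 * v ^ 5 + 5 * w ^ 5 = 0 →
    u = 0 ∧ v = 0 ∧ w = 0 := by decide

lemma key_dvd (a b c : ℤ_[11]) (h : 3 * a ^ 5 + 4 * b ^ 5 + 5 * c ^ 5 = 0) :
    (11 : ℤ_[11]) ∣ a ∧ (11 : ℤ_[11]) ∣ b ∧ (11 : ℤ_[11]) ∣ c := by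
  have h2 : (3 : ZMod 11) * (PadicInt.toZMod a) ^ 5 + 4 * (PadicInt.toZMod b) ^ 5
      + 5 * (PadicInt.toZMod c) ^ 5 = 0 := by
    have := congrArg PadicInt.toZMod h
    push_cast [map_add, map_mul, map_pow, map_ofNat] at this
    simpa using this
  obtain ⟨ha, hb, hc⟩ := zmod11_aux _ _ _ h2
  have key : ∀ x : ℤ_[11], PadicInt.toZMod x = 0 → (11 : ℤ_[11]) ∣ x := by
    intro x hx
    have : x ∈ RingHom.ker (PadicInt.toZMod : ℤ_[11] →+* ZMod 11) := hx
    rw [PadicInt.ker_toZMod, PadicInt.maximalIdeal_eq_span_p,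
      Ideal.mem_span_singleton] at this
    exact_mod_cast this
  exact ⟨key a ha, key b hb, key c hc⟩

lemma descent (n : ℕ) : ∀ a b c : ℤ_[11], 3 * a ^ 5 + 4 * b ^ 5 + 5 * c ^ 5 = 0 →
    (11 : ℤ_[11]) ^ n ∣ a ∧ (11 : ℤ_[11]) ^ n ∣ b ∧ (11 : ℤ_[11]) ^ n ∣ c := by
  induction n with
  | zero => intro a b c _; simp
  | succ n ih =>
    intro a b c h
    obtain ⟨⟨a₁, rfl⟩, ⟨b₁, rfl⟩, ⟨c₁, rfl⟩⟩ := key_dvd a b c h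
    have h11 : (11 : ℤ_[11]) ≠ 0 := by
      exact_mod_cast (Nat.Prime.ne_zero (by norm_num : Nat.Prime 11) : (11:ℕ) ≠ 0)
    have h5 : (11 : ℤ_[11]) ^ 5 * (3 * a₁ ^ 5 + 4 * b₁ ^ 5 + 5 * c₁ ^ 5) = 0 := by
      ring_nf; ring_nf at h; linear_combination h
    have h' : 3 * a₁ ^ 5 + 4 * b₁ ^ 5 + 5 * c₁ ^ 5 = 0 := by
      rcases mul_eq_zero.mp h5 with hp | h' 
      · exact absurd hp (pow_ne_zero _ h11)
      · exact h'
    obtain ⟨ha, hb, hc⟩ := ih a₁ b₁ c₁ h'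
    refine ⟨?_, ?_, ?_⟩ <;> rw [pow_succ']
    exacts [mul_dvd_mul_left _ ha, mul_dvd_mul_left _ hb, mul_dvd_mul_left _ hc]

lemma eq_zero_int (a b c : ℤ_[11]) (h : 3 * a ^ 5 + 4 * b ^ 5 + 5 * c ^ 5 = 0) :
    a = 0 ∧ b = 0 ∧ c = 0 := by
  have key : ∀ x : ℤ_[11], (∀ n : ℕ, (11 : ℤ_[11]) ^ n ∣ x) → x = 0 := by
    intro x hx
    have hn : ∀ n : ℕ, ‖x‖ ≤ (11 : ℝ)⁻¹ ^ n := by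
      intro n
      obtain ⟨k, rfl⟩ := hx n
      have hcast : ((11:ℕ):ℤ_[11]) = (11:ℤ_[11]) := by norm_cast
      have hnorm : ‖(11:ℤ_[11]) ^ n * k‖ = (11:ℝ)⁻¹ ^ n * ‖k‖ := by
        rw [norm_mul, norm_pow, ← hcast, PadicInt.norm_p]
        norm_num
      rw [hnorm]
      calc (11:ℝ)⁻¹ ^ n * ‖k‖ ≤ (11:ℝ)⁻¹ ^ n * 1 :=
            mul_le_mul_of_nonneg_left k.norm_le_one (by positivity)
        _ = (11:ℝ)⁻¹ ^ n := mul_one _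
    have : ‖x‖ ≤ 0 := by
      have := ge_of_tendsto' (tendsto_pow_atTop_nhds_zero_of_lt_one (by norm_num)
        (by norm_num : (11:ℝ)⁻¹ < 1)) hn
      linarith
    simpa using le_antisymm this (norm_nonneg x)
  exact ⟨key a (fun n => (descent n a b c h).1),
    key b (fun n => (descent n a b c h).2.1),
    key c (fun n => (descent n a b c h).2.2)⟩

theorem no_Q11_points_3_4_5 :
    ¬ ∃ x y z : ℚ_[11], (x, y, z) ≠ (0, 0, 0) ∧
      3 * x ^ 5 + 4 * y ^ 5 + 5 * z ^ 5 = 0 := by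
  rintro ⟨x, y, z, hne, heq⟩
  -- find N so that 11^N * each has norm ≤ 1
  have hbound : ∀ w : ℚ_[11], ∃ n : ℕ, ‖w‖ ≤ (11 : ℝ) ^ n := by
    intro w
    obtain ⟨n, hn⟩ := exists_nat_gt ‖w‖
    exact ⟨n, le_trans hn.le (by exact_mod_cast Nat.le_of_lt (Nat.lt_pow_self (n := n) (by norm_num : 1 < 11)))⟩
  obtain ⟨nx, hx⟩ := hbound x
  obtain ⟨ny, hy⟩ := hbound y
  obtain ⟨nz, hz⟩ := hbound z
  set N := max nx (max ny nz) with hN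
  have hmem : ∀ w : ℚ_[11], ∀ n : ℕ, ‖w‖ ≤ (11:ℝ) ^ n → n ≤ N → ‖(11:ℚ_[11]) ^ N * w‖ ≤ 1 := by
    intro w n hw hnN
    have hcast : ((11:ℕ):ℚ_[11]) = (11:ℚ_[11]) := by norm_cast
    rw [norm_mul, norm_pow, ← hcast, Padic.norm_p]
    push_cast
    rw [inv_pow, inv_mul_le_iff₀ (by positivity), mul_one]
    exact le_trans hw (pow_le_pow_right₀ (by norm_num) hnN)
  have hax := hmem x nx hx (le_max_left _ _)
  have hay := hmem y ny hy (le_trans (le_max_left _ _) (le_max_right _ _))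
  have haz := hmem z nz hz (le_trans (le_max_right _ _) (le_max_right _ _))
  set a : ℤ_[11] := ⟨(11:ℚ_[11]) ^ N * x, hax⟩
  set b : ℤ_[11] := ⟨(11:ℚ_[11]) ^ N * y, hay⟩
  set c : ℤ_[11] := ⟨(11:ℚ_[11]) ^ N * z, haz⟩
  have heq2 : 3 * a ^ 5 + 4 * b ^ 5 + 5 * c ^ 5 = 0 := by
    apply Subtype.coe_injective
    push_cast
    show 3 * ((11:ℚ_[11]) ^ N * x) ^ 5 + 4 * ((11:ℚ_[11]) ^ N * y) ^ 5
      + 5 * ((11:ℚ_[11]) ^ N * z) ^ 5 = 0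
    have : 3 * ((11:ℚ_[11]) ^ N * x) ^ 5 + 4 * ((11:ℚ_[11]) ^ N * y) ^ 5
        + 5 * ((11:ℚ_[11]) ^ N * z) ^ 5
        = ((11:ℚ_[11]) ^ N) ^ 5 * (3 * x ^ 5 + 4 * y ^ 5 + 5 * z ^ 5) := by ring
    rw [this, heq, mul_zero]
  obtain ⟨ha, hb, hc⟩ := eq_zero_int a b c heq2
  have h11 : (11:ℚ_[11]) ^ N ≠ 0 := by
    apply pow_ne_zero
    exact_mod_cast (Nat.Prime.ne_zero (by norm_num : Nat.Prime 11) : (11:ℕ) ≠ 0)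
  have hx0 : x = 0 := by
    have : (11:ℚ_[11]) ^ N * x = 0 := congrArg Subtype.val ha
    exact (mul_eq_zero.mp this).resolve_left h11
  have hy0 : y = 0 := by
    have : (11:ℚ_[11]) ^ N * y = 0 := congrArg Subtype.val hb
    exact (mul_eq_zero.mp this).resolve_left h11
  have hz0 : z = 0 := by
    have : (11:ℚ_[11]) ^ N * z = 0 := congrArg Subtype.val hc
    exact (mul_eq_zero.mp this).resolve_left h11
  exact hne (by simp [hx0, hy0, hz0])
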